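/- Let σ be a strongly convex rational polyhedral cone in N_ℝ (N a lattice of rank n) whose rays span N_ℝ. Suppose there exists a direct sum decomposition N_ℂ = ⊕_{m∈M} E^σ_m into subspaces indexed by the dual lattice, such that for every ray ρ of σ with primitive generator u_ρ and every i ∈ {0, 1, 2}: ⊕_{⟨m,u_ρ⟩ ≥ 2} E^σ_m = 0, ⊕_{⟨m,u_ρ⟩ ≥ 1} E^σ_m = ℂ·u_ρ, and ⊕_{⟨m,u_ρ⟩ ≥ 0} E^σ_m = N_ℂ. Then the primitive ray generators {u_ρ} form a ℤ-basis of N; in particular σ is a smooth cone. -/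

import Mathlib

/-- The realification map `N = ℤⁿ → N_ℝ = ℝⁿ`. -/
def toR {n : ℕ} (u : Fin n → ℤ) : Fin n → ℝ := fun i => (u i : ℝ)

/-- The complexification map `N = ℤⁿ → N_ℂ = ℂⁿ`. -/
def toC {n : ℕ} (u : Fin n → ℤ) : Fin n → ℂ := fun i => (u i : ℂ)

/-- A lattice vector is primitive if it is nonzero and not a non-unit integer
multiple of another lattice vector. -/
def Primitive {n : ℕ} (u : Fin n → ℤ) : Prop :=
  u ≠ 0 ∧ ∀ (k : ℤ) (v : Fin n → ℤ), u = k • v → IsUnit k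

/-- The rational polyhedral cone in `N_ℝ = ℝⁿ` generated by a finite set of
lattice vectors. -/
def coneOf {n : ℕ} (gens : Finset (Fin n → ℤ)) : Set (Fin n → ℝ) :=
  {x | ∃ c : (Fin n → ℤ) → ℝ, (∀ v, 0 ≤ c v) ∧ x = ∑ v ∈ gens, c v • toR v}

lemma toR_injective {n : ℕ} : Function.Injective (toR (n := n)) := by
  intro a b h
  funext i
  have := congrFun h i
  simp only [toR] at this
  exact_mod_cast this

lemma toR_zero {n : ℕ} : toR (0 : Fin n → ℤ) = 0 := by
  funext i; simp [toR]

lemma toC_ne_zero {n : ℕ} {u : Fin n → ℤ} (h : u ≠ 0) : toC u ≠ 0 := by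
  intro hc
  apply h
  funext i
  have := congrFun hc i
  simp only [toC, Pi.zero_apply] at this
  exact_mod_cast this

lemma mem_coneOf {n : ℕ} {gens : Finset (Fin n → ℤ)} {u : Fin n → ℤ} (hu : u ∈ gens) :
    toR u ∈ coneOf gens := by
  classical
  refine ⟨fun v => if v = u then 1 else 0, fun v => by dsimp only; split <;> norm_num, ?_⟩
  rw [Finset.sum_congr rfl (fun v _ => by
    show (if v = u then (1:ℝ) else 0) • toR v = if v = u then toR v else 0
    split <;> simp)]
  rw [Finset.sum_ite_eq' gens u (fun v => toR v), if_pos hu]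

/-- Two primitive integer vectors satisfying `q • u = p • v` with `q ≠ 0` are
equal up to sign. -/
lemma primitive_rel {n : ℕ} {u v : Fin n → ℤ} (hu : Primitive u) (hv : Primitive v)
    {p q : ℤ} (hq : q ≠ 0) (h : q • u = p • v) : u = v ∨ u = -v := by
  have hp : p ≠ 0 := by
    rintro rfl
    simp only [zero_smul] at h
    exact hu.1 (by
      funext i
      have := congrFun h i
      simp only [Pi.smul_apply, smul_eq_mul, Pi.zero_apply] at this ⊢
      exact (mul_eq_zero.mp this).resolve_left hq)
  set g : ℕ := Int.gcd p q with hgdef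
  have hgpos : 0 < g := Int.gcd_pos_of_ne_zero_left q hp
  have hgne : (g : ℤ) ≠ 0 := Int.natCast_ne_zero.mpr hgpos.ne'
  obtain ⟨p₀, hpg⟩ : ((g : ℤ)) ∣ p := Int.gcd_dvd_left p q
  obtain ⟨q₀, hqg⟩ : ((g : ℤ)) ∣ q := Int.gcd_dvd_right p q
  have hcop : IsCoprime p₀ q₀ := by
    rw [Int.isCoprime_iff_gcd_eq_one]
    have hmul : Int.gcd ((g : ℤ) * p₀) ((g : ℤ) * q₀) = g * Int.gcd p₀ q₀ := by
      rw [Int.gcd_mul_left]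
      simp
    rw [← hpg, ← hqg, ← hgdef] at hmul
    exact (Nat.eq_of_mul_eq_mul_left hgpos (by rw [← hmul, mul_one])).symm
  have h' : q₀ • u = p₀ • v := by
    apply smul_right_injective (Fin n → ℤ) hgne
    show (g : ℤ) • (q₀ • u) = (g : ℤ) • (p₀ • v)
    rw [smul_smul, smul_smul, ← hpg, ← hqg, h]
  obtain ⟨a, b, hab⟩ := hcop
  have hvq : v = q₀ • (a • u + b • v) := by
    calc v = (a * p₀ + b * q₀) • v := by rw [hab, one_smul]
    _ = a • (p₀ • v) + b • (q₀ • v) := by rw [add_smul, mul_smul, mul_smul]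
    _ = a • (q₀ • u) + b • (q₀ • v) := by rw [h']
    _ = q₀ • (a • u + b • v) := by
        rw [smul_add, smul_comm a q₀, smul_comm b q₀]
  have hup : u = p₀ • (a • u + b • v) := by
    calc u = (a * p₀ + b * q₀) • u := by rw [hab, one_smul]
    _ = a • (p₀ • u) + b • (q₀ • u) := by rw [add_smul, mul_smul, mul_smul]
    _ = a • (p₀ • u) + b • (p₀ • v) := by rw [h']
    _ = p₀ • (a • u + b • v) := by
        rw [smul_add, smul_comm a p₀, smul_comm b p₀]
  have hq₀ : q₀ = 1 ∨ q₀ = -1 := Int.isUnit_iff.mp (hv.2 q₀ _ hvq)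
  have hp₀ : p₀ = 1 ∨ p₀ = -1 := Int.isUnit_iff.mp (hu.2 p₀ _ hup)
  rcases hq₀ with h1 | h1 <;> rcases hp₀ with h2 | h2 <;>
    rw [h1, h2] at h' <;> simp only [one_smul, neg_one_smul] at h'
  · exact Or.inl h'
  · exact Or.inr h'
  · exact Or.inr (by rw [← h', neg_neg])
  · exact Or.inl (neg_injective h')

/-- Two parallel (over `ℂ`) primitive generators of a strongly convex cone are equal. -/
lemma parallel_eq {n : ℕ} {gens : Finset (Fin n → ℤ)}
    (hprim : ∀ u ∈ gens, Primitive u)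
    (hconv : ∀ x ∈ coneOf gens, -x ∈ coneOf gens → x = 0)
    {u v : Fin n → ℤ} (hu : u ∈ gens) (hv : v ∈ gens)
    {a b : ℂ} (ha : a ≠ 0) (h : a • toC u = b • toC v) : u = v := by
  have hu0 : u ≠ 0 := (hprim u hu).1
  have hv0 : v ≠ 0 := (hprim v hv).1
  obtain ⟨k, hk⟩ : ∃ k, u k ≠ 0 := by
    by_contra hc
    push_neg at hc
    exact hu0 (funext hc)
  have hcoord : ∀ j, a * (u j : ℂ) = b * (v j : ℂ) := fun j => by
    have := congrFun h j
    simpa [toC, smul_eq_mul] using this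
  have hz : ∀ j, u j * v k = u k * v j := by
    intro j
    have hC : a * ((u j : ℂ) * (v k : ℂ)) = a * ((u k : ℂ) * (v j : ℂ)) := by
      calc a * ((u j : ℂ) * (v k : ℂ)) = (a * u j) * v k := by ring
      _ = (b * v j) * v k := by rw [hcoord j]
      _ = (b * v k) * v j := by ring
      _ = (a * u k) * v j := by rw [hcoord k]
      _ = a * ((u k : ℂ) * (v j : ℂ)) := by ring
    have := mul_left_cancel₀ ha hC
    exact_mod_cast this
  have hvk : v k ≠ 0 := by
    intro hvk
    apply hv0
    funext j
    have hj := hz j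
    rw [hvk, mul_zero] at hj
    exact (mul_eq_zero.mp hj.symm).resolve_left hk
  have hrel : (v k) • u = (u k) • v := by
    funext j
    simp only [Pi.smul_apply, smul_eq_mul]
    rw [mul_comm (v k) (u j), hz j]
  rcases primitive_rel (hprim u hu) (hprim v hv) hvk hrel with heq | heq
  · exact heq
  · exfalso
    have hvu : v = -u := by rw [heq, neg_neg]
    have hcu : toR u ∈ coneOf gens := mem_coneOf hu
    have hcv : -toR u ∈ coneOf gens := by
      have hR : toR v = -toR u := by
        funext j
        rw [hvu]
        simp [toR]
      rw [← hR]
      exact mem_coneOf hv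
    have h0 := hconv _ hcu hcv
    exact hu0 (toR_injective (by rw [h0, toR_zero]))

/-- Evaluation of an integral dual functional as a sum over coordinates. -/
lemma dual_eval {n : ℕ} (φ : Module.Dual ℤ (Fin n → ℤ)) (z : Fin n → ℤ) :
    φ z = ∑ i, z i * φ (Pi.single i 1) := by
  conv_lhs => rw [← Finset.univ_sum_single z]
  rw [map_sum]
  refine Finset.sum_congr rfl fun i _ => ?_
  have h : Pi.single i (z i) = z i • (Pi.single i 1 : Fin n → ℤ) := by
    rw [← Pi.single_smul, smul_eq_mul, mul_one]
  rw [h, map_smul, smul_eq_mul]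

/-- The real extension of an integral dual functional. -/
noncomputable def dualR {n : ℕ} (φ : Module.Dual ℤ (Fin n → ℤ)) : (Fin n → ℝ) →ₗ[ℝ] ℝ :=
  ∑ i, (φ (Pi.single i 1) : ℝ) • (LinearMap.proj i)

lemma dualR_toR {n : ℕ} (φ : Module.Dual ℤ (Fin n → ℤ)) (z : Fin n → ℤ) :
    dualR φ (toR z) = (φ z : ℝ) := by
  rw [dual_eval φ z]
  push_cast
  simp only [dualR, LinearMap.sum_apply, LinearMap.smul_apply, LinearMap.proj_apply,
    smul_eq_mul, toR]
  exact Finset.sum_congr rfl fun i _ => mul_comm _ _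

/-- Main combinatorial theorem: let `σ` be a strongly convex rational
polyhedral cone in `N_ℝ` whose rays span `N_ℝ`, with set `gens` of primitive
ray generators.  Suppose there is a direct sum decomposition
`N_ℂ = ⊕_{m ∈ S} E_m` indexed by dual lattice elements (a finite index type
`ι` injecting via `wt` into `M = Hom(N, ℤ)`) such that for every ray generator
`u_ρ ∈ gens`: `⊕_{⟨m,u_ρ⟩ ≥ 2} E_m = 0`, `⊕_{⟨m,u_ρ⟩ ≥ 1} E_m = ℂ·u_ρ` and
`⊕_{⟨m,u_ρ⟩ ≥ 0} E_m = N_ℂ` (Klyachko's local freeness condition for the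
tangent sheaf).  Then the primitive ray generators form a `ℤ`-basis of `N`,
i.e. `σ` is a smooth cone. -/
theorem klyachko_tangent_locally_free_implies_smooth (n : ℕ)
    (gens : Finset (Fin n → ℤ))
    (hprim : ∀ u ∈ gens, Primitive u)
    (hconv : ∀ x ∈ coneOf gens, -x ∈ coneOf gens → x = 0)
    (hspan : Submodule.span ℝ (toR '' (gens : Set (Fin n → ℤ))) = ⊤)
    (ι : Type) [Fintype ι] [DecidableEq ι]
    (wt : ι → Module.Dual ℤ (Fin n → ℤ)) (hwt : Function.Injective wt)
    (E : ι → Submodule ℂ (Fin n → ℂ)) (hds : DirectSum.IsInternal E)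
    (h2 : ∀ u ∈ gens, (⨆ i, ⨆ _ : 2 ≤ wt i u, E i) = (⊥ : Submodule ℂ (Fin n → ℂ)))
    (h1 : ∀ u ∈ gens, (⨆ i, ⨆ _ : 1 ≤ wt i u, E i) = Submodule.span ℂ {toC u})
    (h0 : ∀ u ∈ gens, (⨆ i, ⨆ _ : 0 ≤ wt i u, E i) = (⊤ : Submodule ℂ (Fin n → ℂ))) :
    ∃ b : Module.Basis {u // u ∈ gens} ℤ (Fin n → ℤ), ∀ u : {u // u ∈ gens}, b u = (u : Fin n → ℤ) := by
  classical
  -- Step A: every nonzero summand has nonnegative weight on every generator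
  have hA : ∀ u ∈ gens, ∀ i, E i ≠ ⊥ → 0 ≤ wt i u := by
    intro u hu i hne
    by_contra hlt
    have hdisj : Disjoint (E i) (⨆ j, ⨆ _ : 0 ≤ wt j u, E j) :=
      (hds.submodule_iSupIndep i).mono_right
        (iSup₂_le fun j hj =>
          le_iSup₂_of_le j (show j ≠ i by rintro rfl; exact hlt hj) le_rfl)
    rw [h0 u hu] at hdisj
    exact hne (disjoint_top.mp hdisj)
  -- Step B: every nonzero summand has weight at most 1 on every generator
  have hB : ∀ u ∈ gens, ∀ i, E i ≠ ⊥ → wt i u ≤ 1 := by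
    intro u hu i hne
    by_contra hgt
    push_neg at hgt
    have hle : E i ≤ ⨆ j, ⨆ _ : 2 ≤ wt j u, E j :=
      le_iSup₂_of_le i (by omega) le_rfl
    rw [h2 u hu] at hle
    exact hne (le_bot_iff.mp hle)
  -- Step C: for each generator there is a summand of weight exactly 1
  have hC : ∀ u ∈ gens, ∃ i, E i ≠ ⊥ ∧ wt i u = 1 := by
    intro u hu
    have hsne : Submodule.span ℂ {toC u} ≠ ⊥ := by
      rw [Submodule.span_singleton_eq_bot.ne]
      exact toC_ne_zero (hprim u hu).1
    rw [← h1 u hu] at hsne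
    by_contra hc
    push_neg at hc
    apply hsne
    refine le_bot_iff.mp (iSup₂_le fun j hj => ?_)
    rcases eq_or_ne (E j) ⊥ with hb | hb
    · exact hb.le
    · exfalso
      have hb1 := hB u hu j hb
      have hb2 := hc j hb
      omega
  choose iu hiune hiu1 using hC
  -- the chosen dual functionals, indexed by the subtype of generators
  set m : {u // u ∈ gens} → Module.Dual ℤ (Fin n → ℤ) :=
    fun i => wt (iu i.1 i.2) with hm
  have hdiag : ∀ i : {u // u ∈ gens}, m i i.1 = 1 := fun i => hiu1 i.1 i.2
  -- off-diagonal weights vanish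
  have hoff : ∀ i j : {u // u ∈ gens}, j ≠ i → m i j.1 = 0 := by
    intro i j hne
    have hnonneg := hA j.1 j.2 (iu i.1 i.2) (hiune i.1 i.2)
    rcases eq_or_lt_of_le hnonneg with heq | hpos
    · exact heq.symm
    · exfalso
      have hEu : E (iu i.1 i.2) ≤ Submodule.span ℂ {toC i.1} := by
        rw [← h1 i.1 i.2]
        exact le_iSup₂_of_le (iu i.1 i.2) (by rw [hiu1 i.1 i.2]) le_rfl
      have hEv : E (iu i.1 i.2) ≤ Submodule.span ℂ {toC j.1} := by
        rw [← h1 j.1 j.2]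
        exact le_iSup₂_of_le (iu i.1 i.2) hpos le_rfl
      obtain ⟨x, hxE, hx0⟩ := (Submodule.ne_bot_iff _).mp (hiune i.1 i.2)
      obtain ⟨a, ha⟩ := Submodule.mem_span_singleton.mp (hEu hxE)
      obtain ⟨b, hb⟩ := Submodule.mem_span_singleton.mp (hEv hxE)
      have ha0 : a ≠ 0 := by rintro rfl; rw [zero_smul] at ha; exact hx0 ha.symm
      exact hne (Subtype.ext (parallel_eq hprim hconv i.2 j.2 ha0 (by rw [ha, hb])).symm)
  -- a lattice vector killed by all the chosen functionals is zero
  have hkill : ∀ y : Fin n → ℤ, (∀ i : {u // u ∈ gens}, m i y = 0) → y = 0 := by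
    intro y hy
    have hmem : toR y ∈ Submodule.span ℝ (toR '' (gens : Set (Fin n → ℤ))) := by
      rw [hspan]; trivial
    rw [show toR '' (gens : Set (Fin n → ℤ)) = ((gens.image toR : Finset (Fin n → ℝ)) :
        Set (Fin n → ℝ)) by rw [Finset.coe_image], Submodule.mem_span_finset] at hmem
    obtain ⟨f, -, hf⟩ := hmem
    rw [Finset.sum_image (fun x _ y _ h => toR_injective h)] at hf
    have hcoeff : ∀ i : {u // u ∈ gens}, f (toR i.1) = 0 := by
      intro i
      have h1' : dualR (m i) (toR y) = 0 := by
        rw [dualR_toR, hy i, Int.cast_zero]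
      rw [← hf, map_sum] at h1'
      simp only [map_smul, dualR_toR, smul_eq_mul] at h1'
      rw [← Finset.sum_attach gens (fun v => f (toR v) * ((m i v : ℤ) : ℝ))] at h1'
      rw [Finset.sum_eq_single i (fun j _ hjne => by
          rw [hoff i j hjne, Int.cast_zero, mul_zero])
        (fun hni => absurd (Finset.mem_attach _ _) hni)] at h1'
      rw [hdiag i] at h1'
      simpa using h1'
    apply toR_injective
    rw [← hf, Finset.sum_congr rfl (fun v hv => by rw [hcoeff ⟨v, hv⟩, zero_smul]),
      toR_zero]
    simp
  -- every lattice vector is the integral combination of generators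
  have hrepr : ∀ x : Fin n → ℤ, x = ∑ j ∈ gens.attach, (m j x) • (j.1 : Fin n → ℤ) := by
    intro x
    have h := hkill (x - ∑ j ∈ gens.attach, (m j x) • (j.1 : Fin n → ℤ)) ?_
    · exact sub_eq_zero.mp h
    · intro i
      rw [map_sub, map_sum]
      simp only [map_smul, smul_eq_mul]
      rw [Finset.sum_eq_single i (fun j _ hjne => by
          rw [hoff i j hjne, mul_zero])
        (fun hni => absurd (Finset.mem_attach _ _) hni)]
      rw [hdiag i, mul_one, sub_self]
  -- linear independence of the generators
  have hli : LinearIndependent ℤ (fun i : {u // u ∈ gens} => (i : Fin n → ℤ)) := by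
    rw [Fintype.linearIndependent_iff]
    intro g hg i
    have happ := congrArg (m i) hg
    rw [map_sum, map_zero] at happ
    simp only [map_smul, smul_eq_mul] at happ
    rw [Finset.univ_eq_attach] at happ
    rw [Finset.sum_eq_single i (fun j _ hjne => by
        rw [hoff i j hjne, mul_zero])
      (fun hni => absurd (Finset.mem_attach _ _) hni)] at happ
    rw [hdiag i, mul_one] at happ
    exact happ
  -- the generators span the lattice
  have hsp : ⊤ ≤ Submodule.span ℤ (Set.range (fun i : {u // u ∈ gens} => (i : Fin n → ℤ))) := by
    intro x _
    rw [hrepr x]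
    exact Submodule.sum_mem _ (fun j _ =>
      Submodule.smul_mem _ _ (Submodule.subset_span ⟨j, rfl⟩))
  exact ⟨Module.Basis.mk hli hsp, fun u => Module.Basis.mk_apply hli hsp u⟩
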